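/- Let R > 0, L > 0, π > 0, s > 0 be real numbers with 2Rπ > L, and let α be a real number with α ≥ ln(2Rπ/L) and α > 0. Then for every real y, the solar-regime price p₁(y) = (L/(2R))·(2Rπ/L)^(y/s) satisfies p₁(y) − 0 ≥ (1/α)·s·(p₁(y)·ln(2Rπ/L)/s). (This is the Differential Allocation–Payment Relationship (p(y) − f'(y))·dy ≥ (1/α)·f*'(p(y))·dp in the regime y < s, where the cost derivative is f' = 0 and the conjugate derivative is f*' = s.) -/

import Mathlib

/-- Differential Allocation–Payment Relationship in the solar regime:
with cost derivative `0` and conjugate derivative `s`, the price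
`p₁(y) = (L/(2R))·(2Rπ/L)^(y/s)` satisfies
`p₁(y) − 0 ≥ (1/α)·s·(p₁(y)·ln(2Rπ/L)/s)` whenever `α ≥ ln(2Rπ/L)` and `α > 0`. -/
theorem solar_differential_allocation_payment
    (R L π s α : ℝ) (hR : 0 < R) (hL : 0 < L) (hπ : 0 < π) (hs : 0 < s)
    (hbase : L < 2 * R * π) (hα : Real.log (2 * R * π / L) ≤ α) (hα0 : 0 < α) (y : ℝ) :
    L / (2 * R) * (2 * R * π / L) ^ (y / s) - 0 ≥
      (1 / α) * s *
        ((L / (2 * R) * (2 * R * π / L) ^ (y / s)) * Real.log (2 * R * π / L) / s) := by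
  have hp : 0 < L / (2 * R) * (2 * R * π / L) ^ (y / s) := by
    apply mul_pos (div_pos hL (by linarith))
    exact Real.rpow_pos_of_pos (div_pos (by linarith) hL) _
  set p := L / (2 * R) * (2 * R * π / L) ^ (y / s)
  have h : (1 / α) * s * (p * Real.log (2 * R * π / L) / s)
      = p * (Real.log (2 * R * π / L) / α) := by
    field_simp
  rw [h, ge_iff_le, sub_zero]
  calc p * (Real.log (2 * R * π / L) / α) ≤ p * 1 := by
        apply mul_le_mul_of_nonneg_left _ hp.le
        exact (div_le_one hα0).2 hα
    _ = p := mul_one p
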